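/- Let (G, π₁) and (G, π₂) be permutation groups on the same finite group G, with induced matrix representations Π₁, Π₂ and subspaces U_{Π_i} := { Σ_{g∈G} λ_g M_{π_i(g)} : Σ_g λ_g = 0 } regarded as G-modules via h · M := M_{π_i(h)} M. If there is a group automorphism φ of G and an ℝ-linear isomorphism Φ : U_{Π₁} → U_{Π₂} satisfying Φ(g · u) = φ(g) · Φ(u) for all u ∈ U_{Π₁} and all g ∈ G, then (G, π₁) and (G, π₂) are effectively equivalent. -/

import Mathlib

open Finset

/-- The permutation matrix of `σ`: `(M_σ)_{ij} = 1` if `i = σ j` and `0` otherwise. -/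
def permMat (n : ℕ) (σ : Equiv.Perm (Fin n)) : Matrix (Fin n) (Fin n) ℝ :=
  Matrix.of fun i j => if i = σ j then 1 else 0

lemma permMat_one (n : ℕ) : permMat n 1 = 1 := by
  ext i j; simp [permMat, Matrix.one_apply]; congr

lemma permMat_mul (n : ℕ) (σ τ : Equiv.Perm (Fin n)) :
    permMat n (σ * τ) = permMat n σ * permMat n τ := by
  ext i j
  simp only [permMat, Matrix.mul_apply, Matrix.of_apply, Equiv.Perm.mul_apply]
  rw [Finset.sum_eq_single (τ j)]
  · simp; congr
  · intro k _ hk; simp [hk]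
  · simp

/-- The matrix representation `Π : G → GL_n(ℝ)`, `g ↦ M_{π(g)}`, acting on `ℝⁿ`. -/
noncomputable def permRep (n : ℕ) {G : Type} [Group G] (π : G →* Equiv.Perm (Fin n)) :
    Representation ℝ G (Fin n → ℝ) where
  toFun g := (permMat n (π g)).mulVecLin
  map_one' := by simp [permMat_one]; rfl
  map_mul' g h := by simp [permMat_mul]; rfl

/-- The linear map sending a family `(λ_g)` to `∑_g λ_g M_{π(g)}`. -/
noncomputable def combo (n : ℕ) {G : Type} [Group G] [Fintype G]
    (π : G →* Equiv.Perm (Fin n)) : (G → ℝ) →ₗ[ℝ] Matrix (Fin n) (Fin n) ℝ where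
  toFun l := ∑ g : G, l g • permMat n (π g)
  map_add' x y := by simp [add_smul, Finset.sum_add_distrib]
  map_smul' c x := by simp [smul_smul, Finset.smul_sum]

/-- The linear functional `(λ_g) ↦ ∑_g λ_g`. -/
noncomputable def coordSum (G : Type) [Fintype G] : (G → ℝ) →ₗ[ℝ] ℝ where
  toFun l := ∑ g : G, l g
  map_add' x y := by simp [Finset.sum_add_distrib]
  map_smul' c x := by simp [Finset.mul_sum]

/-- `U_Π = { ∑ λ_g M_{π(g)} : ∑ λ_g = 0 }`. -/
noncomputable def Usub (n : ℕ) {G : Type} [Group G] [Fintype G]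
    (π : G →* Equiv.Perm (Fin n)) : Submodule ℝ (Matrix (Fin n) (Fin n) ℝ) :=
  (LinearMap.ker (coordSum G)).map (combo n π)

variable {G : Type} [Group G] [Fintype G]

/-- The affine kernel `ker°ρ` of a real representation `ρ` of `G`. -/
def affKer {V : Type} [AddCommGroup V] [Module ℝ V]
    (ρ : Representation ℝ G V) : Set (G → ℝ) :=
  {l | (∑ g : G, l g • (ρ g : V →ₗ[ℝ] V)) = 0 ∧ (∑ g : G, l g) = 0}

/-- Direct sum (realized on the product space) of two representations. -/
def prodRep {V W : Type} [AddCommGroup V] [Module ℝ V] [AddCommGroup W] [Module ℝ W]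
    (ρ : Representation ℝ G V) (σ : Representation ℝ G W) :
    Representation ℝ G (V × W) where
  toFun g := (ρ g).prodMap (σ g)
  map_one' := by ext <;> simp
  map_mul' g h := by ext <;> simp

/-- Isomorphism of `G`-representations. -/
def RepIso {V W : Type} [AddCommGroup V] [Module ℝ V] [AddCommGroup W] [Module ℝ W]
    (ρ : Representation ℝ G V) (σ : Representation ℝ G W) : Prop :=
  ∃ e : V ≃ₗ[ℝ] W, ∀ (g : G) (v : V), e (ρ g v) = σ g (e v)

/-- Stable equivalence of real representations. -/
def StablyEquivalent {V W : Type} [AddCommGroup V] [Module ℝ V] [AddCommGroup W] [Module ℝ W]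
    (ρ₁ : Representation ℝ G V) (ρ₂ : Representation ℝ G W) : Prop :=
  ∃ (V' : Type) (_ : AddCommGroup V') (_ : Module ℝ V') (ρ₁' : Representation ℝ G V')
    (W' : Type) (_ : AddCommGroup W') (_ : Module ℝ W') (ρ₂' : Representation ℝ G W'),
    affKer ρ₁ ⊆ affKer ρ₁' ∧ affKer ρ₂ ⊆ affKer ρ₂' ∧
    RepIso (prodRep ρ₁ ρ₁') (prodRep ρ₂ ρ₂')


section AuxLemmas

lemma mulVecLin_eq_zero_iff {n : ℕ} {M : Matrix (Fin n) (Fin n) ℝ} (h : M.mulVecLin = 0) :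
    M = 0 := by
  apply Matrix.toLin'.injective
  rw [Matrix.toLin'_apply', h]; simp

lemma sum_smul_mulVecLin {G : Type} [Fintype G] {n : ℕ} (l : G → ℝ)
    (M : G → Matrix (Fin n) (Fin n) ℝ) :
    ∑ g : G, l g • (M g).mulVecLin = (∑ g : G, l g • M g).mulVecLin := by
  rw [← Matrix.toLin'_apply', map_sum]
  simp [Matrix.toLin'_apply']

variable {G' : Type} [Group G'] [Fintype G']

lemma lemA {n : ℕ} (π : G' →* Equiv.Perm (Fin n)) (l : G' → ℝ) (hsum : ∑ g : G', l g = 0)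
    (hA : ∀ h : G', (∑ g : G', l g • permMat n (π g)) * permMat n (π h)
      = ∑ g : G', l g • permMat n (π g)) :
    ∑ g : G', l g • permMat n (π g) = 0 := by
  set A := ∑ g : G', l g • permMat n (π g) with hAdef
  have hS : ∀ g : G', permMat n (π g) * (∑ h : G', permMat n (π h))
      = ∑ h : G', permMat n (π h) := by
    intro g
    rw [Finset.mul_sum]
    refine Fintype.sum_equiv (Equiv.mulLeft g) _ _ ?_
    intro h
    rw [← permMat_mul, ← map_mul]
    rfl
  have h1 : A * (∑ h : G', permMat n (π h)) = (Fintype.card G' : ℝ) • A := by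
    rw [Finset.mul_sum]
    simp [hA, Finset.sum_const, ← Nat.cast_smul_eq_nsmul ℝ]
  have h2 : A * (∑ h : G', permMat n (π h)) = 0 := by
    rw [hAdef, Finset.sum_mul]
    have heach : ∀ g : G', l g • permMat n (π g) * (∑ h : G', permMat n (π h))
        = l g • ∑ h : G', permMat n (π h) := by
      intro g; rw [Matrix.smul_mul, hS]
    rw [Finset.sum_congr rfl fun g _ => heach g, ← Finset.sum_smul, hsum, zero_smul]
  rcases smul_eq_zero.mp (h1.symm.trans h2) with h | h
  · exact absurd (Nat.cast_injective (h.trans (Nat.cast_zero).symm)) Fintype.card_ne_zero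
  · exact h

lemma combo_single [DecidableEq G'] {n : ℕ} (π : G' →* Equiv.Perm (Fin n)) (h : G') :
    combo n π (Pi.single h (1 : ℝ)) = permMat n (π h) := by
  have hc : combo n π (Pi.single h (1 : ℝ))
      = ∑ g : G', (Pi.single h (1 : ℝ) : G' → ℝ) g • permMat n (π g) := rfl
  rw [hc, Finset.sum_eq_single h]
  · simp
  · intro b _ hb; simp [Pi.single_apply, hb.symm]
  · simp

lemma Umem_sub_one [DecidableEq G'] {n : ℕ} (π : G' →* Equiv.Perm (Fin n)) (h : G') :
    permMat n (π h) - 1 ∈ Usub n π := by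
  refine ⟨(Pi.single h 1 - Pi.single (1 : G') 1 : G' → ℝ), ?_, ?_⟩
  · show ∑ g : G', (Pi.single h 1 - Pi.single (1 : G') 1 : G' → ℝ) g = 0
    simp [Finset.sum_sub_distrib]
  · rw [map_sub, combo_single, combo_single, map_one, permMat_one]

lemma Umem_mul {n : ℕ} (π : G' →* Equiv.Perm (Fin n)) (g : G')
    {u : Matrix (Fin n) (Fin n) ℝ} (hu : u ∈ Usub n π) :
    permMat n (π g) * u ∈ Usub n π := by
  obtain ⟨l, hl, rfl⟩ := hu
  refine ⟨fun h => l (g⁻¹ * h), ?_, ?_⟩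
  · show ∑ h : G', l (g⁻¹ * h) = 0
    exact (Fintype.sum_equiv (Equiv.mulLeft g⁻¹) (fun h => l (g⁻¹ * h)) l fun h => rfl).trans hl
  · show ∑ h : G', l (g⁻¹ * h) • permMat n (π h)
      = permMat n (π g) * ∑ h : G', l h • permMat n (π h)
    rw [Finset.mul_sum]
    refine Fintype.sum_equiv (Equiv.mulLeft g⁻¹) _ _ ?_
    intro h
    have : permMat n (π h) = permMat n (π g) * permMat n (π (g⁻¹ * h)) := by
      rw [← permMat_mul, ← map_mul, mul_inv_cancel_left]
    rw [this, Matrix.mul_smul]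
    rfl

end AuxLemmas

/-- (b) ⇒ (a) of the characterization theorem. If there is a group
automorphism `φ` of `G` and an `ℝ`-linear isomorphism `Φ : U_{Π₁} → U_{Π₂}` with
`Φ(g·u) = φ(g)·Φ(u)` (where `g·M = M_{πᵢ(g)} M`), then `(G, π₁)` and `(G, π₂)` are
effectively equivalent. -/
theorem equivariant_iso_on_U_implies_effectivelyEquivalent
    {n₁ n₂ : ℕ} (π₁ : G →* Equiv.Perm (Fin n₁)) (π₂ : G →* Equiv.Perm (Fin n₂))
    (hπ₁ : Function.Injective π₁) (hπ₂ : Function.Injective π₂)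
    (h : ∃ (φ : G ≃* G) (Φ : ↥(Usub n₁ π₁) ≃ₗ[ℝ] ↥(Usub n₂ π₂)),
      ∀ (g : G) (u v : ↥(Usub n₁ π₁)),
        (v : Matrix (Fin n₁) (Fin n₁) ℝ) = permMat n₁ (π₁ g) * (u : Matrix (Fin n₁) (Fin n₁) ℝ) →
        (Φ v : Matrix (Fin n₂) (Fin n₂) ℝ) =
          permMat n₂ (π₂ (φ g)) * (Φ u : Matrix (Fin n₂) (Fin n₂) ℝ)) :
    ∃ φ : G ≃* G,
      StablyEquivalent (permRep n₁ π₁) ((permRep n₂ π₂).comp φ.toMonoidHom) := by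
  classical
  obtain ⟨φ, Φ, hΦ⟩ := h
  have act : ∀ (g : G) (u : ↥(Usub n₁ π₁)),
      ((Φ ⟨permMat n₁ (π₁ g) * ↑u, Umem_mul π₁ g u.2⟩ : ↥(Usub n₂ π₂)) : Matrix (Fin n₂) (Fin n₂) ℝ)
        = permMat n₂ (π₂ (φ g)) * ((Φ u : ↥(Usub n₂ π₂)) : Matrix (Fin n₂) (Fin n₂) ℝ) := by
    intro g u
    exact hΦ g u ⟨permMat n₁ (π₁ g) * ↑u, Umem_mul π₁ g u.2⟩ rfl
  have key : ∀ l : G → ℝ, (∑ g : G, l g = 0) →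
      ((∑ g : G, l g • permMat n₁ (π₁ g) = 0) ↔
       (∑ g : G, l g • permMat n₂ (π₂ (φ g)) = 0)) := by
    intro l hsum
    constructor
    · intro hM
      have hAw : ∀ w : ↥(Usub n₂ π₂),
          (∑ g : G, l g • permMat n₂ (π₂ (φ g))) * (w : Matrix (Fin n₂) (Fin n₂) ℝ) = 0 := by
        intro w
        obtain ⟨u, rfl⟩ := Φ.surjective w
        have hz : (∑ g : G, l g • (⟨permMat n₁ (π₁ g) * ↑u, Umem_mul π₁ g u.2⟩ :
            ↥(Usub n₁ π₁))) = 0 := by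
          apply Subtype.ext
          push_cast
          rw [show (∑ g : G, l g • (permMat n₁ (π₁ g) * (u : Matrix (Fin n₁) (Fin n₁) ℝ)))
              = (∑ g : G, l g • permMat n₁ (π₁ g)) * ↑u by
            rw [Finset.sum_mul]
            exact Finset.sum_congr rfl fun g _ => (Matrix.smul_mul _ _ _).symm]
          rw [hM, Matrix.zero_mul]
        have hzz := congrArg (fun x : ↥(Usub n₁ π₁) => ((Φ x : ↥(Usub n₂ π₂)) : Matrix (Fin n₂) (Fin n₂) ℝ)) hz
        simp only [map_sum, map_smul, map_zero] at hzz
        push_cast at hzz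
        calc (∑ g : G, l g • permMat n₂ (π₂ (φ g))) * ((Φ u : ↥(Usub n₂ π₂)) : Matrix (Fin n₂) (Fin n₂) ℝ)
            = ∑ g : G, l g • (permMat n₂ (π₂ (φ g)) * ((Φ u : ↥(Usub n₂ π₂)) : Matrix (Fin n₂) (Fin n₂) ℝ)) := by
              rw [Finset.sum_mul]
              exact Finset.sum_congr rfl fun g _ => Matrix.smul_mul _ _ _
          _ = ∑ g : G, l g • ((Φ ⟨permMat n₁ (π₁ g) * ↑u, Umem_mul π₁ g u.2⟩ : ↥(Usub n₂ π₂)) :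
                Matrix (Fin n₂) (Fin n₂) ℝ) :=
              Finset.sum_congr rfl fun g _ => by rw [act]
          _ = 0 := hzz
      refine lemA (π₂.comp φ.toMonoidHom) l hsum ?_
      intro h
      have := hAw ⟨permMat n₂ (π₂ (φ h)) - 1, Umem_sub_one π₂ (φ h)⟩
      simp only [Matrix.mul_sub, Matrix.mul_one, sub_eq_zero] at this
      exact this
    · intro hM
      have hBu : ∀ u : ↥(Usub n₁ π₁),
          (∑ g : G, l g • permMat n₁ (π₁ g)) * (u : Matrix (Fin n₁) (Fin n₁) ℝ) = 0 := by
        intro u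
        have hz : (∑ g : G, l g • (⟨permMat n₁ (π₁ g) * ↑u, Umem_mul π₁ g u.2⟩ :
            ↥(Usub n₁ π₁))) = 0 := by
          apply Φ.injective
          apply Subtype.ext
          simp only [map_sum, map_smul, map_zero]
          push_cast
          calc ∑ g : G, l g • ((Φ ⟨permMat n₁ (π₁ g) * ↑u, Umem_mul π₁ g u.2⟩ : ↥(Usub n₂ π₂)) :
                Matrix (Fin n₂) (Fin n₂) ℝ)
              = ∑ g : G, l g • (permMat n₂ (π₂ (φ g)) * ((Φ u : ↥(Usub n₂ π₂)) : Matrix (Fin n₂) (Fin n₂) ℝ)) :=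
                Finset.sum_congr rfl fun g _ => by rw [act]
            _ = (∑ g : G, l g • permMat n₂ (π₂ (φ g))) * ((Φ u : ↥(Usub n₂ π₂)) : Matrix (Fin n₂) (Fin n₂) ℝ) := by
                rw [Finset.sum_mul]
                exact Finset.sum_congr rfl fun g _ => (Matrix.smul_mul _ _ _).symm
            _ = 0 := by rw [hM, Matrix.zero_mul]
        have hzz := congrArg (fun x : ↥(Usub n₁ π₁) => (↑x : Matrix (Fin n₁) (Fin n₁) ℝ)) hz
        push_cast at hzz
        rw [show (∑ g : G, l g • (permMat n₁ (π₁ g) * (u : Matrix (Fin n₁) (Fin n₁) ℝ)))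
            = (∑ g : G, l g • permMat n₁ (π₁ g)) * ↑u by
          rw [Finset.sum_mul]
          exact Finset.sum_congr rfl fun g _ => (Matrix.smul_mul _ _ _).symm] at hzz
        exact hzz
      refine lemA π₁ l hsum ?_
      intro h
      have := hBu ⟨permMat n₁ (π₁ h) - 1, Umem_sub_one π₁ h⟩
      simp only [Matrix.mul_sub, Matrix.mul_one, sub_eq_zero] at this
      exact this
  have kerEq : affKer (permRep n₁ π₁) = affKer ((permRep n₂ π₂).comp φ.toMonoidHom) := by
    ext l
    constructor
    · rintro ⟨hmap, hsum⟩
      refine ⟨?_, hsum⟩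
      have hM : ∑ g : G, l g • permMat n₁ (π₁ g) = 0 := by
        apply mulVecLin_eq_zero_iff
        rw [← sum_smul_mulVecLin l fun g => permMat n₁ (π₁ g)]
        exact hmap
      have hh := (key l hsum).mp hM
      show ∑ g : G, l g • (permMat n₂ (π₂ (φ g))).mulVecLin = 0
      rw [sum_smul_mulVecLin l fun g => permMat n₂ (π₂ (φ g)), hh, Matrix.mulVecLin_zero]
    · rintro ⟨hmap, hsum⟩
      refine ⟨?_, hsum⟩
      have hM : ∑ g : G, l g • permMat n₂ (π₂ (φ g)) = 0 := by
        apply mulVecLin_eq_zero_iff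
        rw [← sum_smul_mulVecLin l fun g => permMat n₂ (π₂ (φ g))]
        exact hmap
      have hh := (key l hsum).mpr hM
      show ∑ g : G, l g • (permMat n₁ (π₁ g)).mulVecLin = 0
      rw [sum_smul_mulVecLin l fun g => permMat n₁ (π₁ g), hh, Matrix.mulVecLin_zero]
  refine ⟨φ, Fin n₂ → ℝ, inferInstance, inferInstance, (permRep n₂ π₂).comp φ.toMonoidHom,
    Fin n₁ → ℝ, inferInstance, inferInstance, permRep n₁ π₁,
    le_of_eq kerEq, le_of_eq kerEq.symm, ?_⟩
  exact ⟨LinearEquiv.prodComm ℝ (Fin n₁ → ℝ) (Fin n₂ → ℝ), fun g v => rfl⟩
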